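/- Let 0 < α₂ < α₁ < 1, s₁⁰, s₂⁰ ∈ (0,1), and set s₁ᵏ = s₁⁰/(k+1)^{α₁}, s₂ᵏ = s₂⁰/(k+1)^{α₂}. For every integer k ≥ 1 satisfying k/(k+1)^{α₂} ≥ 2(ln s₂⁰ + (1+α₁−α₂) ln k)/s₂⁰, one has ∑_{l=0}^{k−1} s₁ˡ ∏_{t=l}^{k−1} (1 − s₂^{t+1}) ≤ 5 s₁⁰ / (s₂⁰ k^{α₁−α₂}). -/

import Mathlib

set_option maxHeartbeats 1000000 in
theorem bias_sum_bound (α₁ α₂ s₁ s₂ : ℝ) (hα₂ : 0 < α₂) (hα₁₂ : α₂ < α₁) (hα₁ : α₁ < 1)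
    (hs₁ : s₁ ∈ Set.Ioo (0:ℝ) 1) (hs₂ : s₂ ∈ Set.Ioo (0:ℝ) 1) (k : ℕ) (hk : 1 ≤ k)
    (hcond : 2 * (Real.log s₂ + (1 + α₁ - α₂) * Real.log k) / s₂
      ≤ (k : ℝ) / ((k : ℝ) + 1) ^ α₂) :
    ∑ l ∈ Finset.range k, (s₁ / ((l : ℝ) + 1) ^ α₁) *
        ∏ t ∈ Finset.Ico l k, (1 - s₂ / ((t : ℝ) + 2) ^ α₂)
      ≤ 5 * s₁ / (s₂ * (k : ℝ) ^ (α₁ - α₂)) := by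
  obtain ⟨hs₁0, hs₁1⟩ := hs₁
  obtain ⟨hs₂0, hs₂1⟩ := hs₂
  have hK1 : (1:ℝ) ≤ (k:ℝ) := by exact_mod_cast hk
  have hK0 : (0:ℝ) < (k:ℝ) := by linarith
  have hα₂1 : α₂ < 1 := hα₁₂.trans hα₁
  have hα₁0 : 0 < α₁ := hα₂.trans hα₁₂
  have hKp1 : (1:ℝ) ≤ ((k:ℝ) + 1) ^ α₂ := by
    calc (1:ℝ) = 1 ^ α₂ := (Real.one_rpow α₂).symm
      _ ≤ ((k:ℝ)+1) ^ α₂ := Real.rpow_le_rpow zero_le_one (by linarith) hα₂.le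
  set q : ℝ := s₂ / ((k:ℝ) + 1) ^ α₂ with hq
  have hP0 : (0:ℝ) < ((k:ℝ)+1) ^ α₂ := by linarith
  have hq0 : 0 < q := div_pos hs₂0 hP0
  have hqs : q ≤ s₂ := div_le_self hs₂0.le hKp1
  have hq1 : q < 1 := lt_of_le_of_lt hqs hs₂1
  have hD0 : 0 < (k:ℝ) ^ (α₁ - α₂) := Real.rpow_pos_of_pos hK0 _
  -- each factor nonneg
  have fac_nonneg : ∀ t : ℕ, 0 ≤ 1 - s₂ / ((t : ℝ) + 2) ^ α₂ := by
    intro t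
    have h1 : (1:ℝ) ≤ ((t:ℝ)+2) ^ α₂ := by
      calc (1:ℝ) = 1 ^ α₂ := (Real.one_rpow α₂).symm
        _ ≤ ((t:ℝ)+2) ^ α₂ := Real.rpow_le_rpow zero_le_one (by have : (0:ℝ) ≤ (t:ℝ) := Nat.cast_nonneg t; linarith) hα₂.le
    have h2 : s₂ / ((t:ℝ)+2) ^ α₂ ≤ s₂ := div_le_self hs₂0.le h1
    linarith
  have prod_nonneg : ∀ l : ℕ,
      0 ≤ ∏ t ∈ Finset.Ico l k, (1 - s₂ / ((t : ℝ) + 2) ^ α₂) :=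
    fun l => Finset.prod_nonneg (fun t _ => fac_nonneg t)
  -- product bound
  have prod_le : ∀ l : ℕ,
      ∏ t ∈ Finset.Ico l k, (1 - s₂ / ((t : ℝ) + 2) ^ α₂) ≤ (1 - q) ^ (k - l) := by
    intro l
    calc ∏ t ∈ Finset.Ico l k, (1 - s₂ / ((t : ℝ) + 2) ^ α₂)
        ≤ ∏ _t ∈ Finset.Ico l k, (1 - q) := by
          apply Finset.prod_le_prod (fun t _ => fac_nonneg t)
          intro t ht
          rw [Finset.mem_Ico] at ht
          have h3 : (t:ℝ) + 1 ≤ (k:ℝ) := by exact_mod_cast ht.2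
          have h4 : ((t:ℝ)+2) ^ α₂ ≤ ((k:ℝ)+1) ^ α₂ :=
            Real.rpow_le_rpow (by positivity) (by linarith) hα₂.le
          have h5 : q ≤ s₂ / ((t:ℝ)+2) ^ α₂ := by
            rw [hq]; gcongr
          linarith
      _ = (1 - q) ^ (k - l) := by rw [Finset.prod_const, Nat.card_Ico]
  have hmk : k/2 ≤ k := Nat.div_le_self k 2
  have hsplit : ∑ l ∈ Finset.range k, (s₁ / ((l : ℝ) + 1) ^ α₁) *
        ∏ t ∈ Finset.Ico l k, (1 - s₂ / ((t : ℝ) + 2) ^ α₂)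
      = (∑ l ∈ Finset.Ico 0 (k/2), (s₁ / ((l : ℝ) + 1) ^ α₁) *
            ∏ t ∈ Finset.Ico l k, (1 - s₂ / ((t : ℝ) + 2) ^ α₂))
        + ∑ l ∈ Finset.Ico (k/2) k, (s₁ / ((l : ℝ) + 1) ^ α₁) *
            ∏ t ∈ Finset.Ico l k, (1 - s₂ / ((t : ℝ) + 2) ^ α₂) := by
    rw [Finset.range_eq_Ico]
    exact (Finset.sum_Ico_consecutive _ (Nat.zero_le _) hmk).symm
  -- the key exponential bound
  have hB : (1-q) ^ (k - k/2) ≤ 1 / (s₂ * (k:ℝ) ^ (1 + α₁ - α₂)) := by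
    have e1 : (1-q) ^ (k - k/2) ≤ Real.exp (-q) ^ (k - k/2) :=
      pow_le_pow_left₀ (by linarith) (by have := Real.add_one_le_exp (-q); linarith) _
    have e2 : Real.exp (-q) ^ (k - k/2) = Real.exp (((k - k/2 : ℕ) : ℝ) * (-q)) :=
      (Real.exp_nat_mul _ _).symm
    have h6 : (k:ℝ) ≤ 2 * ((k - k/2 : ℕ):ℝ) := by
      exact_mod_cast (by omega : k ≤ 2*(k - k/2))
    have e3 : ((k - k/2 : ℕ):ℝ) * (-q) ≤ -(q * (k:ℝ)/2) := by nlinarith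
    have e4 : 2*(Real.log s₂ + (1+α₁-α₂)*Real.log (k:ℝ)) ≤ q * (k:ℝ) := by
      rw [div_le_div_iff₀ hs₂0 hP0] at hcond
      rw [hq, div_mul_eq_mul_div, le_div_iff₀ hP0]
      linarith
    have e6 : Real.exp (-(Real.log s₂ + (1+α₁-α₂)*Real.log (k:ℝ)))
        = 1/(s₂ * (k:ℝ)^(1+α₁-α₂)) := by
      rw [Real.exp_neg, Real.exp_add, Real.exp_log hs₂0,
        mul_comm (1+α₁-α₂) (Real.log (k:ℝ)), ← Real.rpow_def_of_pos hK0, one_div]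
    calc (1-q) ^ (k - k/2) ≤ Real.exp (-q) ^ (k - k/2) := e1
      _ = Real.exp (((k - k/2 : ℕ) : ℝ) * (-q)) := e2
      _ ≤ Real.exp (-(q * (k:ℝ)/2)) := Real.exp_le_exp.mpr e3
      _ ≤ Real.exp (-(Real.log s₂ + (1+α₁-α₂)*Real.log (k:ℝ))) :=
          Real.exp_le_exp.mpr (by linarith)
      _ = 1/(s₂ * (k:ℝ)^(1+α₁-α₂)) := e6
  have hS₁ : (∑ l ∈ Finset.Ico 0 (k/2), (s₁ / ((l : ℝ) + 1) ^ α₁) *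
        ∏ t ∈ Finset.Ico l k, (1 - s₂ / ((t : ℝ) + 2) ^ α₂))
      ≤ s₁ / (s₂ * (k:ℝ) ^ (α₁ - α₂)) := by
    have hBnn : 0 ≤ (1-q) ^ (k - k/2) := pow_nonneg (by linarith) _
    calc (∑ l ∈ Finset.Ico 0 (k/2), (s₁ / ((l : ℝ) + 1) ^ α₁) *
        ∏ t ∈ Finset.Ico l k, (1 - s₂ / ((t : ℝ) + 2) ^ α₂))
        ≤ ∑ _l ∈ Finset.Ico 0 (k/2), s₁ * (1-q) ^ (k - k/2) := by
          apply Finset.sum_le_sum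
          intro l hl
          rw [Finset.mem_Ico] at hl
          have hl1 : (1:ℝ) ≤ ((l:ℝ)+1)^α₁ := by
            calc (1:ℝ) = 1 ^ α₁ := (Real.one_rpow α₁).symm
              _ ≤ ((l:ℝ)+1) ^ α₁ := Real.rpow_le_rpow zero_le_one (by have : (0:ℝ) ≤ (l:ℝ) := Nat.cast_nonneg l; linarith) hα₁0.le
          have hf1 : s₁ / ((l:ℝ)+1)^α₁ ≤ s₁ := div_le_self hs₁0.le hl1
          have hfnn : 0 ≤ s₁ / ((l:ℝ)+1)^α₁ := by positivity
          have hmono : (1-q)^(k-l) ≤ (1-q)^(k - k/2) :=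
            pow_le_pow_of_le_one (by linarith) (by linarith) (by omega)
          calc (s₁ / ((l : ℝ) + 1) ^ α₁) *
              ∏ t ∈ Finset.Ico l k, (1 - s₂ / ((t : ℝ) + 2) ^ α₂)
              ≤ s₁ * (1-q)^(k-l) := mul_le_mul hf1 (prod_le l) (prod_nonneg l) hs₁0.le
            _ ≤ s₁ * (1-q)^(k - k/2) := mul_le_mul_of_nonneg_left hmono hs₁0.le
      _ = ((k/2 : ℕ) : ℝ) * (s₁ * (1-q)^(k - k/2)) := by
          rw [Finset.sum_const, Nat.card_Ico, Nat.sub_zero, nsmul_eq_mul]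
      _ ≤ (k:ℝ) * (s₁ * (1 / (s₂ * (k:ℝ) ^ (1 + α₁ - α₂)))) := by
          apply mul_le_mul _ (mul_le_mul_of_nonneg_left hB hs₁0.le)
            (by positivity) hK0.le
          exact_mod_cast Nat.cast_le.mpr hmk
      _ = s₁ / (s₂ * (k:ℝ) ^ (α₁ - α₂)) := by
          rw [show (1+α₁-α₂ : ℝ) = 1 + (α₁-α₂) by ring, Real.rpow_add hK0, Real.rpow_one]
          field_simp
  have hS₂ : (∑ l ∈ Finset.Ico (k/2) k, (s₁ / ((l : ℝ) + 1) ^ α₁) *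
        ∏ t ∈ Finset.Ico l k, (1 - s₂ / ((t : ℝ) + 2) ^ α₂))
      ≤ 4 * s₁ / (s₂ * (k:ℝ) ^ (α₁ - α₂)) := by
    have hM0 : (0:ℝ) < ((k/2 : ℕ):ℝ) + 1 := by positivity
    have hMα0 : (0:ℝ) < (((k/2 : ℕ):ℝ) + 1) ^ α₁ := Real.rpow_pos_of_pos hM0 _
    have hsum : ∑ l ∈ Finset.Ico (k/2) k, (1-q)^(k-l) ≤ 1/q := by
      have h1 : ∑ j ∈ (Finset.Ico (k/2) k).image (fun l => k - l), (1-q)^j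
          = ∑ l ∈ Finset.Ico (k/2) k, (1-q)^(k-l) := by
        apply Finset.sum_image
        intro a ha b hb hab
        rw [Finset.coe_Ico, Set.mem_Ico] at ha hb
        simp only at hab
        omega
      rw [← h1]
      calc ∑ j ∈ (Finset.Ico (k/2) k).image (fun l => k - l), (1-q)^j
          ≤ ∑ j ∈ Finset.range (k+1), (1-q)^j := by
            apply Finset.sum_le_sum_of_subset_of_nonneg
            · intro j hj
              simp only [Finset.mem_image, Finset.mem_Ico] at hj
              obtain ⟨a, ha, rfl⟩ := hj
              simp only [Finset.mem_range]
              omega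
            · intro j _ _
              exact pow_nonneg (by linarith) j
        _ ≤ 1/q := by
            rw [geom_sum_eq (show (1:ℝ)-q ≠ 1 by intro h; linarith) (k+1)]
            have hpow : 0 ≤ (1-q)^(k+1) := pow_nonneg (by linarith) _
            have h2 : ((1-q)^(k+1) - 1)/((1-q) - 1) = (1 - (1-q)^(k+1))/q := by
              rw [show (1:ℝ)-q - 1 = -q by ring, div_neg, ← neg_div, neg_sub]
            rw [h2]
            gcongr
            linarith
    have hterm : ∀ l ∈ Finset.Ico (k/2) k,
        (s₁ / ((l : ℝ) + 1) ^ α₁) *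
          ∏ t ∈ Finset.Ico l k, (1 - s₂ / ((t : ℝ) + 2) ^ α₂)
        ≤ s₁ / (((k/2 : ℕ):ℝ) + 1) ^ α₁ * (1-q)^(k-l) := by
      intro l hl
      rw [Finset.mem_Ico] at hl
      have hml : ((k/2 : ℕ):ℝ) + 1 ≤ (l:ℝ) + 1 := by
        have : ((k/2 : ℕ):ℝ) ≤ (l:ℝ) := Nat.cast_le.mpr hl.1
        linarith
      have hdenom : (((k/2 : ℕ):ℝ) + 1) ^ α₁ ≤ ((l:ℝ) + 1) ^ α₁ :=
        Real.rpow_le_rpow hM0.le hml hα₁0.le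
      have hf : s₁ / ((l:ℝ)+1)^α₁ ≤ s₁ / (((k/2 : ℕ):ℝ) + 1) ^ α₁ := by
        gcongr
      exact mul_le_mul hf (prod_le l) (prod_nonneg l) (by positivity)
    calc (∑ l ∈ Finset.Ico (k/2) k, (s₁ / ((l : ℝ) + 1) ^ α₁) *
          ∏ t ∈ Finset.Ico l k, (1 - s₂ / ((t : ℝ) + 2) ^ α₂))
        ≤ ∑ l ∈ Finset.Ico (k/2) k, s₁ / (((k/2 : ℕ):ℝ) + 1) ^ α₁ * (1-q)^(k-l) :=
          Finset.sum_le_sum hterm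
      _ = s₁ / (((k/2 : ℕ):ℝ) + 1) ^ α₁ * ∑ l ∈ Finset.Ico (k/2) k, (1-q)^(k-l) := by
          rw [Finset.mul_sum]
      _ ≤ s₁ / (((k/2 : ℕ):ℝ) + 1) ^ α₁ * (1/q) :=
          mul_le_mul_of_nonneg_left hsum (by positivity)
      _ = s₁ * ((k:ℝ)+1)^α₂ / ((((k/2 : ℕ):ℝ) + 1) ^ α₁ * s₂) := by
          rw [hq, one_div_div, div_mul_div_comm]
      _ ≤ s₁ * (2 * (k:ℝ)^α₂) / (((k:ℝ)^α₁ / 2) * s₂) := by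
          have h2k : ((k:ℝ)+1)^α₂ ≤ 2*(k:ℝ)^α₂ := by
            calc ((k:ℝ)+1)^α₂ ≤ (2*(k:ℝ))^α₂ :=
                Real.rpow_le_rpow (by linarith) (by linarith) hα₂.le
              _ = 2^α₂ * (k:ℝ)^α₂ := Real.mul_rpow (by norm_num) hK0.le
              _ ≤ 2 * (k:ℝ)^α₂ := by
                  have h21 : (2:ℝ)^α₂ ≤ 2 := by
                    have := Real.rpow_le_rpow_of_exponent_le (one_le_two) hα₂1.le
                    rwa [Real.rpow_one] at this
                  have hknn : 0 ≤ (k:ℝ)^α₂ := Real.rpow_nonneg hK0.le α₂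
                  nlinarith
          have hmb : (k:ℝ)^α₁ / 2 ≤ (((k/2 : ℕ):ℝ) + 1) ^ α₁ := by
            have hM : (k:ℝ)/2 ≤ ((k/2 : ℕ):ℝ) + 1 := by
              have h7 : (k:ℝ) ≤ 2*((k/2 : ℕ):ℝ) + 2 := by
                exact_mod_cast (by omega : k ≤ 2*(k/2) + 2)
              linarith
            have h2a : (2:ℝ)^α₁ ≤ 2 := by
              have := Real.rpow_le_rpow_of_exponent_le (one_le_two) hα₁.le
              rwa [Real.rpow_one] at this
            have h2a0 : (0:ℝ) < (2:ℝ)^α₁ := Real.rpow_pos_of_pos (by norm_num) _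
            have hknn : 0 ≤ (k:ℝ)^α₁ := Real.rpow_nonneg hK0.le α₁
            calc (k:ℝ)^α₁ / 2 ≤ (k:ℝ)^α₁ / (2:ℝ)^α₁ := by gcongr
              _ = ((k:ℝ)/2)^α₁ := (Real.div_rpow hK0.le (by norm_num : (0:ℝ) ≤ 2) α₁).symm
              _ ≤ (((k/2 : ℕ):ℝ) + 1) ^ α₁ :=
                  Real.rpow_le_rpow (by positivity) hM hα₁0.le
          have hd0 : (0:ℝ) < (k:ℝ)^α₁ / 2 := by
            have := Real.rpow_pos_of_pos hK0 α₁; linarith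
          gcongr
      _ = 4 * s₁ / (s₂ * (k:ℝ) ^ (α₁ - α₂)) := by
          have hkα₁ : (0:ℝ) < (k:ℝ)^α₁ := Real.rpow_pos_of_pos hK0 _
          have hkα₂ : (0:ℝ) < (k:ℝ)^α₂ := Real.rpow_pos_of_pos hK0 _
          rw [Real.rpow_sub hK0]
          field_simp
          ring
  rw [hsplit]
  have hfin : 5 * s₁ / (s₂ * (k:ℝ) ^ (α₁ - α₂))
      = s₁ / (s₂ * (k:ℝ) ^ (α₁ - α₂)) + 4 * s₁ / (s₂ * (k:ℝ) ^ (α₁ - α₂)) := by ring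
  linarith
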